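/- Let μ be a nonnegative Borel measure on ℝ, invariant under the reflection z ↦ −z, with μ(ℝ) < ∞, and let f ∈ C¹(ℝ). Let c ≠ 0 and let u ∈ C²(ℝ) be bounded, monotone nonincreasing, with lim_{x→−∞} u(x) = 1 and lim_{x→+∞} u(x) = 0, satisfying c u'(x) + ∫_ℝ (u(x+z) − u(x)) dμ(z) + f(u(x)) = 0 for every x ∈ ℝ. Then c² · sup_{x∈ℝ} |u''(x)| ≤ (2 μ(ℝ) + sup_{s∈[0,1]} |f(s)| + sup_{s∈[0,1]} |f'(s)|)². -/

import Mathlib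

open MeasureTheory Filter Topology Set

/-- Truncated nonlocal operator `D_{μ,δ} u (x) = ∫_{|z| ≥ δ} (u(x+z) − u(x)) dμ(z)`. -/
noncomputable def Dtrunc (μ : Measure ℝ) (u : ℝ → ℝ) (δ : ℝ) (x : ℝ) : ℝ :=
  ∫ z in {z : ℝ | δ ≤ |z|}, (u (x + z) - u x) ∂μ

/-- The principal value `D_μ u (x)` exists and equals `L`. -/
def HasPV (μ : Measure ℝ) (u : ℝ → ℝ) (x : ℝ) (L : ℝ) : Prop :=
  Tendsto (fun δ => Dtrunc μ u δ x) (𝓝[>] (0 : ℝ)) (𝓝 L)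

/-- A symmetric diffuse Lévy measure as in the paper. -/
structure LevyMeasure (μ : Measure ℝ) : Prop where
  symm : Measure.map (fun z : ℝ => -z) μ = μ
  moment : ∫⁻ z, ENNReal.ofReal (min 1 (z ^ 2)) ∂μ < ⊤
  diffuse : ∀ x : ℝ, x ≠ 0 → μ {x} = 0

/-- A bistable nonlinearity with threshold `θ`. -/
structure Bistable (f : ℝ → ℝ) (θ : ℝ) : Prop where
  smooth : ContDiff ℝ 1 f
  f0 : f 0 = 0
  f1 : f 1 = 0
  df1 : deriv f 1 < 0
  θ_mem : θ ∈ Set.Ioo (0 : ℝ) 1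
  df0 : deriv f 0 < 0
  neg : ∀ s ∈ Set.Ioo (0 : ℝ) θ, f s < 0
  fθ : f θ = 0
  pos : ∀ s ∈ Set.Ioo θ (1 : ℝ), 0 < f s
  dfθ : 0 < deriv f θ

/-- An ignition nonlinearity with threshold `θ`. -/
structure Ignition (f : ℝ → ℝ) (θ : ℝ) : Prop where
  smooth : ContDiff ℝ 1 f
  f1 : f 1 = 0
  df1 : deriv f 1 < 0
  θ_mem : θ ∈ Set.Ioo (0 : ℝ) 1
  zero : ∀ s ∈ Set.Icc (0 : ℝ) θ, f s = 0
  pos : ∀ s ∈ Set.Ioo θ (1 : ℝ), 0 < f s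

/-- A monostable nonlinearity. -/
structure Monostable (f : ℝ → ℝ) : Prop where
  smooth : ContDiff ℝ 1 f
  f0 : f 0 = 0
  f1 : f 1 = 0
  df1 : deriv f 1 < 0
  pos : ∀ s ∈ Set.Ioo (0 : ℝ) 1, 0 < f s


/-- uniform bound on `u''` (Proposition 2.1 (3)). -/
theorem front_second_deriv_bound
    (μ : Measure ℝ) [IsFiniteMeasure μ]
    (hsymm : Measure.map (fun z : ℝ => -z) μ = μ)
    (f : ℝ → ℝ) (hf : ContDiff ℝ 1 f)
    (c : ℝ) (hc : c ≠ 0)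
    (u : ℝ → ℝ) (hu : ContDiff ℝ 2 u)
    (hb : ∃ M : ℝ, ∀ x, |u x| ≤ M) (ha : Antitone u)
    (hlb : Tendsto u atBot (𝓝 (1 : ℝ))) (hlt : Tendsto u atTop (𝓝 (0 : ℝ)))
    (heq : ∀ x, c * deriv u x + (∫ z, (u (x + z) - u x) ∂μ) + f (u x) = 0) :
    ∀ x, c ^ 2 * |deriv (deriv u) x| ≤
      (2 * (μ Set.univ).toReal + sSup ((fun s => |f s|) '' Set.Icc (0:ℝ) 1)
        + sSup ((fun s => |deriv f s|) '' Set.Icc (0:ℝ) 1)) ^ 2 := by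
  set m := (μ Set.univ).toReal with hm
  set Cf := sSup ((fun s => |f s|) '' Set.Icc (0:ℝ) 1) with hCf
  set Cf' := sSup ((fun s => |deriv f s|) '' Set.Icc (0:ℝ) 1) with hCf'
  have hm0 : 0 ≤ m := ENNReal.toReal_nonneg
  have hucont : Continuous u := hu.continuous
  have hu2 : Differentiable ℝ u ∧ ContDiff ℝ 1 (deriv u) := by
    have := contDiff_succ_iff_deriv.mp (show ContDiff ℝ (1+1) u by norm_num; exact hu)
    exact ⟨this.1, this.2.2⟩
  have hud : Differentiable ℝ u := hu2.1
  have hu'cont : Continuous (deriv u) := hu2.2.continuous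
  have hu'd : Differentiable ℝ (deriv u) := hu2.2.differentiable one_ne_zero
  have hfd : Differentiable ℝ f := hf.differentiable one_ne_zero
  have hf'cont : Continuous (deriv f) := hf.continuous_deriv le_rfl
  -- u takes values in [0,1]
  have h01 : ∀ x, u x ∈ Icc (0:ℝ) 1 := by
    intro x
    constructor
    · exact le_of_tendsto hlt (eventually_atTop.2 ⟨x, fun y hy => ha hy⟩)
    · exact ge_of_tendsto hlb (eventually_atBot.2 ⟨x, fun y hy => ha hy⟩)
  -- sup bounds
  have hCfb : ∀ s ∈ Icc (0:ℝ) 1, |f s| ≤ Cf := fun s hs =>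
    le_csSup ((isCompact_Icc.image (hf.continuous.abs)).bddAbove) (mem_image_of_mem _ hs)
  have hCf'b : ∀ s ∈ Icc (0:ℝ) 1, |deriv f s| ≤ Cf' := fun s hs =>
    le_csSup ((isCompact_Icc.image (hf'cont.abs)).bddAbove) (mem_image_of_mem _ hs)
  have hCf0 : 0 ≤ Cf := le_trans (abs_nonneg _) (hCfb 0 (by norm_num))
  have hCf'0 : 0 ≤ Cf' := le_trans (abs_nonneg _) (hCf'b 0 (by norm_num))
  -- integrability of the integrand
  have hintu : ∀ x, Integrable (fun z => u (x + z) - u x) μ := by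
    intro x
    refine Integrable.mono' (integrable_const 1)
      (((hucont.comp (continuous_const.add continuous_id)).sub continuous_const).aestronglyMeasurable)
      (ae_of_all _ fun z => ?_)
    have h1 := h01 (x + z); have h2 := h01 x
    rw [Real.norm_eq_abs, abs_sub_le_iff]
    constructor <;> [linarith [h1.1, h1.2, h2.1, h2.2]; linarith [h1.1, h1.2, h2.1, h2.2]]
  -- bound on integral of u
  have hDu : ∀ x, |∫ z, (u (x + z) - u x) ∂μ| ≤ m := by
    intro x
    rw [← Real.norm_eq_abs]
    calc ‖∫ z, (u (x + z) - u x) ∂μ‖ ≤ ∫ z, (1:ℝ) ∂μ := by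
          refine norm_integral_le_of_norm_le (integrable_const 1) (ae_of_all _ fun z => ?_)
          have h1 := h01 (x + z); have h2 := h01 x
          rw [Real.norm_eq_abs, abs_sub_le_iff]
          constructor <;> linarith [h1.1, h1.2, h2.1, h2.2]
      _ = m := by simp [hm, Measure.real]
  -- bound on u'
  set K := (2 * m + Cf) / |c| with hK
  have hcpos : 0 < |c| := abs_pos.2 hc
  have hu'b : ∀ x, |deriv u x| ≤ K := by
    intro x
    rw [hK, le_div_iff₀ hcpos]
    have := heq x
    have h1 : |c * deriv u x| ≤ 2 * m + Cf := by
      have h2 : c * deriv u x = -((∫ z, (u (x + z) - u x) ∂μ) + f (u x)) := by linarith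
      rw [h2, abs_neg]
      calc |(∫ z, (u (x + z) - u x) ∂μ) + f (u x)| ≤ |∫ z, (u (x + z) - u x) ∂μ| + |f (u x)| :=
            abs_add_le _ _
        _ ≤ m + Cf := add_le_add (hDu x) (hCfb _ (h01 x))
        _ ≤ 2 * m + Cf := by linarith
    calc |deriv u x| * |c| = |c * deriv u x| := by rw [abs_mul, mul_comm]
      _ ≤ 2 * m + Cf := h1
  have hK0 : 0 ≤ K := le_trans (abs_nonneg _) (hu'b 0)
  -- integrability of the derivative integrand
  have hintu' : ∀ x, Integrable (fun z => deriv u (x + z) - deriv u x) μ := by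
    intro x
    refine Integrable.mono' (integrable_const (2 * K))
      (((hu'cont.comp (continuous_const.add continuous_id)).sub continuous_const).aestronglyMeasurable)
      (ae_of_all _ fun z => ?_)
    rw [Real.norm_eq_abs]
    calc |deriv u (x + z) - deriv u x| ≤ |deriv u (x + z)| + |deriv u x| := abs_sub _ _
      _ ≤ 2 * K := by linarith [hu'b (x + z), hu'b x]
  -- differentiation under the integral
  have key : ∀ x₀ : ℝ, HasDerivAt (fun x => ∫ z, (u (x + z) - u x) ∂μ)
      (∫ z, (deriv u (x₀ + z) - deriv u x₀) ∂μ) x₀ := by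
    intro x₀
    have := hasDerivAt_integral_of_dominated_loc_of_deriv_le
      (F := fun x z => u (x + z) - u x) (F' := fun x z => deriv u (x + z) - deriv u x)
      (x₀ := x₀) (bound := fun _ => 2 * K) (s := Metric.ball x₀ 1) (Metric.ball_mem_nhds x₀ one_pos)
      (Eventually.of_forall fun x =>
        ((hucont.comp (continuous_const.add continuous_id)).sub continuous_const).aestronglyMeasurable)
      (hintu x₀)
      (((hu'cont.comp (continuous_const.add continuous_id)).sub continuous_const).aestronglyMeasurable)
      (ae_of_all _ fun z x _ => by
        rw [Real.norm_eq_abs]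
        calc |deriv u (x + z) - deriv u x| ≤ |deriv u (x + z)| + |deriv u x| := abs_sub _ _
          _ ≤ 2 * K := by linarith [hu'b (x + z), hu'b x])
      (integrable_const _)
      (ae_of_all _ fun z x _ => by
        have h1 : HasDerivAt (fun x => u (x + z)) (deriv u (x + z)) x := by
          simpa [Function.comp_def] using ((hud (x + z)).hasDerivAt.comp x ((hasDerivAt_id x).add_const z))
        exact h1.sub (hud x).hasDerivAt)
    exact this.2
  intro x₀
  -- identify the derivative of the nonlocal term
  have heq2 : (fun x => ∫ z, (u (x + z) - u x) ∂μ)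
      = fun x => -(c * deriv u x + f (u x)) := by
    funext x; have := heq x; linarith
  have hrhs : HasDerivAt (fun x => -(c * deriv u x + f (u x)))
      (-(c * deriv (deriv u) x₀ + deriv f (u x₀) * deriv u x₀)) x₀ := by
    have h1 : HasDerivAt (fun x => c * deriv u x) (c * deriv (deriv u) x₀) x₀ :=
      ((hu'd x₀).hasDerivAt).const_mul c
    have h2 : HasDerivAt (fun x => f (u x)) (deriv f (u x₀) * deriv u x₀) x₀ :=
      ((hfd (u x₀)).hasDerivAt).comp x₀ (hud x₀).hasDerivAt
    exact (h1.add h2).neg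
  have hmain : ∫ z, (deriv u (x₀ + z) - deriv u x₀) ∂μ
      = -(c * deriv (deriv u) x₀ + deriv f (u x₀) * deriv u x₀) := by
    have := key x₀
    rw [heq2] at this
    exact this.unique hrhs
  -- bound on the derivative integral
  have hDu' : |∫ z, (deriv u (x₀ + z) - deriv u x₀) ∂μ| ≤ 2 * K * m := by
    rw [← Real.norm_eq_abs]
    calc ‖∫ z, (deriv u (x₀ + z) - deriv u x₀) ∂μ‖ ≤ ∫ _z, (2 * K) ∂μ := by
          refine norm_integral_le_of_norm_le (integrable_const _) (ae_of_all _ fun z => ?_)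
          rw [Real.norm_eq_abs]
          calc |deriv u (x₀ + z) - deriv u x₀| ≤ |deriv u (x₀ + z)| + |deriv u x₀| := abs_sub _ _
            _ ≤ 2 * K := by linarith [hu'b (x₀ + z), hu'b x₀]
      _ = 2 * K * m := by simp [hm, mul_comm, Measure.real]
  -- final bound
  have hcu'' : |c * deriv (deriv u) x₀| ≤ 2 * K * m + Cf' * K := by
    have h3 : c * deriv (deriv u) x₀
        = -((∫ z, (deriv u (x₀ + z) - deriv u x₀) ∂μ) + deriv f (u x₀) * deriv u x₀) := by
      rw [hmain]; ring
    rw [h3, abs_neg]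
    calc |(∫ z, (deriv u (x₀ + z) - deriv u x₀) ∂μ) + deriv f (u x₀) * deriv u x₀|
        ≤ |∫ z, (deriv u (x₀ + z) - deriv u x₀) ∂μ| + |deriv f (u x₀) * deriv u x₀| := abs_add_le _ _
      _ ≤ 2 * K * m + Cf' * K := by
          refine add_le_add hDu' ?_
          rw [abs_mul]
          exact mul_le_mul (hCf'b _ (h01 x₀)) (hu'b x₀) (abs_nonneg _) hCf'0
  have hKc : |c| * K = 2 * m + Cf := by
    rw [hK]; field_simp
  have hfinal : c ^ 2 * |deriv (deriv u) x₀| ≤ (2 * m + Cf') * (2 * m + Cf) := by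
    have h4 : c ^ 2 * |deriv (deriv u) x₀| = |c| * |c * deriv (deriv u) x₀| := by
      rw [abs_mul, ← sq_abs c]; ring
    rw [h4]
    calc |c| * |c * deriv (deriv u) x₀| ≤ |c| * (2 * K * m + Cf' * K) :=
          mul_le_mul_of_nonneg_left hcu'' (abs_nonneg c)
      _ = (2 * m + Cf') * (|c| * K) := by ring
      _ = (2 * m + Cf') * (2 * m + Cf) := by rw [hKc]
  nlinarith [hfinal, hm0, hCf0, hCf'0]
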